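/- Let N be a positive integer, A an N×N real skew-symmetric matrix, c ∈ ℝ^N and ε ∈ ℝ. For x ∈ ℝ^N let M(x) = 𝟙 − ε·A·diag(x) and φ(x) = det M(x), and on the open set where φ(x) ≠ 0 define the Kahan map f(x) = M(x)⁻¹ (x + ε c). Then for every x with φ(x) ≠ 0 and φ(f(x)) ≠ 0, f is differentiable at x and the determinant of its derivative satisfies det(Df(x)) = φ(f(x)) / φ(x); equivalently, the volume form dx₁∧…∧dx_N / φ(x) is invariant under f. Moreover, for skew-symmetric A one has det(𝟙 − ε·A·diag(x)) = det(𝟙 + ε·A·diag(x)) for all x and ε, so φ is an even polynomial in ε. -/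

import Mathlib

open Matrix

/-- The matrix `𝟙 - ε·A·diag(x)` of the Kahan discretization
`x̃ᵢ - xᵢ = ε ∑ⱼ aᵢⱼ xⱼ x̃ⱼ + ε cᵢ`. -/
noncomputable def kahanM (N : ℕ) (A : Matrix (Fin N) (Fin N) ℝ) (ε : ℝ)
    (x : Fin N → ℝ) : Matrix (Fin N) (Fin N) ℝ :=
  1 - ε • (A * Matrix.diagonal x)

/-- `φ(x) = det(𝟙 - ε·A·diag(x))`. -/
noncomputable def kahanPhi (N : ℕ) (A : Matrix (Fin N) (Fin N) ℝ) (ε : ℝ)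
    (x : Fin N → ℝ) : ℝ :=
  (kahanM N A ε x).det

/-- The Kahan map `f(x) = (𝟙 - ε·A·diag(x))⁻¹ (x + ε c)`. -/
noncomputable def kahanF (N : ℕ) (A : Matrix (Fin N) (Fin N) ℝ) (c : Fin N → ℝ)
    (ε : ℝ) (x : Fin N → ℝ) : Fin N → ℝ :=
  (kahanM N A ε x)⁻¹ *ᵥ (x + ε • c)

attribute [local instance] Matrix.linftyOpNormedRing Matrix.linftyOpNormedAlgebra

section aux

variable {N : ℕ} (A : Matrix (Fin N) (Fin N) ℝ) (ε : ℝ)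

/-- skew part -/
lemma kahan_skew_det (hA : Aᵀ = -A) (x : Fin N → ℝ) (ε' : ℝ) :
    (1 - ε' • (A * Matrix.diagonal x)).det
      = (1 + ε' • (A * Matrix.diagonal x)).det := by
  have h := Matrix.det_transpose (1 - ε' • (A * Matrix.diagonal x))
  rw [transpose_sub, transpose_smul, transpose_mul, diagonal_transpose, hA,
    transpose_one] at h
  rw [← h]
  have : (1 : Matrix (Fin N) (Fin N) ℝ) - ε' • (Matrix.diagonal x * -A)
      = 1 + (ε' • Matrix.diagonal x) * A := by
    rw [Matrix.mul_neg, smul_neg, sub_neg_eq_add, smul_mul_assoc]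
  rw [this, Matrix.det_one_add_mul_comm, mul_smul_comm]

/-- the linear part of `x ↦ kahanM x` as a linear map -/
noncomputable def kahanD : (Fin N → ℝ) →ₗ[ℝ] Matrix (Fin N) (Fin N) ℝ where
  toFun v := ε • (A * Matrix.diagonal v)
  map_add' u v := by
    have h1 : Matrix.diagonal (u + v) = Matrix.diagonal u + Matrix.diagonal v := by
      ext i j; by_cases h : i = j <;> simp [Matrix.diagonal_apply, h]
    rw [h1, mul_add, smul_add]
  map_smul' r v := by
    dsimp only [RingHom.id_apply]
    have h1 : Matrix.diagonal (r • v) = r • Matrix.diagonal v := by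
      ext i j; by_cases h : i = j <;> simp [Matrix.diagonal_apply, h]
    rw [h1, mul_smul_comm]
    exact smul_comm ε r _

@[simp] lemma kahanD_apply (v : Fin N → ℝ) :
    kahanD A ε v = ε • (A * Matrix.diagonal v) := rfl

/-- matrix to continuous linear map (mulVec) as a linear map -/
noncomputable def kahanT :
    Matrix (Fin N) (Fin N) ℝ →ₗ[ℝ] (Fin N → ℝ) →L[ℝ] (Fin N → ℝ) where
  toFun m := LinearMap.toContinuousLinearMap m.mulVecLin
  map_add' u v := by
    ext w i
    simp [Matrix.add_mulVec]
  map_smul' r v := by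
    ext w i
    simp [Matrix.smul_mulVec]

@[simp] lemma kahanT_apply (m : Matrix (Fin N) (Fin N) ℝ) (v : Fin N → ℝ) :
    kahanT m v = m *ᵥ v := rfl

lemma kahanM_hasFDerivAt (x : Fin N → ℝ) :
    HasFDerivAt (kahanM N A ε)
      (-(LinearMap.toContinuousLinearMap (kahanD A ε))) x := by
  have h1 : HasFDerivAt (fun v => kahanD A ε v)
      (LinearMap.toContinuousLinearMap (kahanD A ε)) x :=
    (LinearMap.toContinuousLinearMap (kahanD A ε)).hasFDerivAt
  have := h1.const_sub 1
  exact this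

end aux

theorem kahan_skew_invariant_measure (N : ℕ) (hN : 0 < N)
    (A : Matrix (Fin N) (Fin N) ℝ) (hA : Aᵀ = -A) (c : Fin N → ℝ) (ε : ℝ) :
    (∀ x : Fin N → ℝ, kahanPhi N A ε x ≠ 0 →
      kahanPhi N A ε (kahanF N A c ε x) ≠ 0 →
      DifferentiableAt ℝ (kahanF N A c ε) x ∧
        (fderiv ℝ (kahanF N A c ε) x).det
          = kahanPhi N A ε (kahanF N A c ε x) / kahanPhi N A ε x) ∧
    (∀ (x : Fin N → ℝ) (ε' : ℝ),
      (1 - ε' • (A * Matrix.diagonal x)).det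
        = (1 + ε' • (A * Matrix.diagonal x)).det) := by
  haveI : CompleteSpace (Matrix (Fin N) (Fin N) ℝ) := FiniteDimensional.complete ℝ _
  refine ⟨?_, fun x ε' => kahan_skew_det A hA x ε'⟩
  intro x hx hy
  set y := kahanF N A c ε x with hydef
  set M := kahanM N A ε x with hMdef
  have hMdet : M.det ≠ 0 := hx
  have hu : IsUnit M := (Matrix.isUnit_iff_isUnit_det M).mpr hMdet.isUnit
  obtain ⟨u, hu'⟩ := hu
  -- derivative of x ↦ (kahanM x)⁻¹
  have hinv : HasFDerivAt (fun z => (kahanM N A ε z)⁻¹)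
      ((-ContinuousLinearMap.mulLeftRight ℝ _ (↑u⁻¹) (↑u⁻¹)).comp
        (-(LinearMap.toContinuousLinearMap (kahanD A ε)))) x := by
    have hring : HasFDerivAt Ring.inverse
        (-ContinuousLinearMap.mulLeftRight ℝ _ (↑u⁻¹) (↑u⁻¹)) (kahanM N A ε x) := by
      rw [← hMdef, ← hu']
      exact hasFDerivAt_ringInverse u
    have h2 := hring.comp x (kahanM_hasFDerivAt A ε x)
    exact h2.congr_of_eventuallyEq (Filter.Eventually.of_forall fun z =>
      Matrix.nonsing_inv_eq_ringInverse _)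
  -- derivative of x ↦ kahanT ((kahanM x)⁻¹)
  have hc : HasFDerivAt (fun z => kahanT ((kahanM N A ε z)⁻¹))
      ((LinearMap.toContinuousLinearMap (kahanT (N := N))).comp
        ((-ContinuousLinearMap.mulLeftRight ℝ _ (↑u⁻¹) (↑u⁻¹)).comp
          (-(LinearMap.toContinuousLinearMap (kahanD A ε))))) x :=
    ((LinearMap.toContinuousLinearMap (kahanT (N := N))).hasFDerivAt).comp x hinv
  have hv : HasFDerivAt (fun z : Fin N → ℝ => z + ε • c)
      (ContinuousLinearMap.id ℝ (Fin N → ℝ)) x :=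
    (hasFDerivAt_id x).add_const (ε • c)
  have hf0 : HasFDerivAt (kahanF N A c ε) _ x := hc.clm_apply hv
  -- identify the derivative with mulVec by the matrix K
  set K := M⁻¹ * (1 + ε • (A * Matrix.diagonal y)) with hK
  have hMinv : M⁻¹ = (↑u⁻¹ : Matrix (Fin N) (Fin N) ℝ) := by
    rw [← hu', Matrix.nonsing_inv_eq_ringInverse, Ring.inverse_unit]
  have hyM : y = M⁻¹ *ᵥ (x + ε • c) := rfl
  have hfd : HasFDerivAt (kahanF N A c ε) (kahanT K) x := by
    refine hf0.congr_fderiv (Eq.symm ?_)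
    refine ContinuousLinearMap.ext fun dx => ?_
    show K *ᵥ dx = _
    simp only [ContinuousLinearMap.add_apply, ContinuousLinearMap.comp_apply,
      ContinuousLinearMap.coe_comp', Function.comp_apply, ContinuousLinearMap.flip_apply,
      ContinuousLinearMap.neg_apply, ContinuousLinearMap.mulLeftRight_apply,
      LinearMap.coe_toContinuousLinearMap', kahanD_apply, kahanT_apply,
      ContinuousLinearMap.coe_id', id_eq, neg_neg, Matrix.mul_neg, Matrix.neg_mul]
    rw [← hMinv, ← hMdef]
    have hdiag : Matrix.diagonal dx *ᵥ y = Matrix.diagonal y *ᵥ dx := by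
      funext i; rw [Matrix.mulVec_diagonal, Matrix.mulVec_diagonal, mul_comm]
    calc K *ᵥ dx = M⁻¹ *ᵥ ((1 + ε • (A * Matrix.diagonal y)) *ᵥ dx) := by
          rw [hK, ← Matrix.mulVec_mulVec]
      _ = M⁻¹ *ᵥ dx + ε • (M⁻¹ *ᵥ ((A * Matrix.diagonal y) *ᵥ dx)) := by
          rw [Matrix.add_mulVec, Matrix.one_mulVec, Matrix.smul_mulVec,
            Matrix.mulVec_add, Matrix.mulVec_smul]
      _ = M⁻¹ *ᵥ dx + (M⁻¹ * (ε • (A * Matrix.diagonal dx)) * M⁻¹) *ᵥ (x + ε • c) := by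
          have key : (M⁻¹ * (ε • (A * Matrix.diagonal dx)) * M⁻¹) *ᵥ (x + ε • c)
              = ε • (M⁻¹ *ᵥ ((A * Matrix.diagonal y) *ᵥ dx)) := by
            conv_lhs => rw [← Matrix.mulVec_mulVec, ← Matrix.mulVec_mulVec, ← hyM,
              Matrix.smul_mulVec, Matrix.mulVec_smul, ← Matrix.mulVec_mulVec,
              hdiag, Matrix.mulVec_mulVec dx A (Matrix.diagonal y)]
          rw [key]
    show _ = M⁻¹ *ᵥ dx + (-(M⁻¹ * (-(ε • (A * Matrix.diagonal dx))) * M⁻¹)) *ᵥ (x + ε • c)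
    rw [Matrix.mul_neg, Matrix.neg_mul, neg_neg]
  refine ⟨hfd.differentiableAt, ?_⟩
  rw [hfd.fderiv]
  have hdet : (kahanT K).det = K.det := by
    show LinearMap.det ((kahanT K) : (Fin N → ℝ) →ₗ[ℝ] (Fin N → ℝ)) = K.det
    rw [show ((kahanT K) : (Fin N → ℝ) →ₗ[ℝ] (Fin N → ℝ)) = K.mulVecLin from rfl,
      ← Matrix.toLin'_apply', LinearMap.det_toLin']
  rw [hdet, hK, Matrix.det_mul, Matrix.det_nonsing_inv]
  have hskew := kahan_skew_det A hA y ε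
  rw [← hskew]
  show Ring.inverse M.det * kahanPhi N A ε y = kahanPhi N A ε y / kahanPhi N A ε x
  rw [Ring.inverse_eq_inv']
  show (kahanPhi N A ε x)⁻¹ * _ = _
  rw [inv_mul_eq_div]
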